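/- If L is a standard-or-continuous global language and L is CUI, then L is concurrency closed (closed under Mazurkiewicz-trace equivalence with independence given by disjoint participant sets). -/

import Mathlib

open scoped Classical

/-- Interactions `A→B:m` over participants and messages drawn from `ℕ`. -/
structure Interaction where
  snd : ℕ
  rcv : ℕ
  msg : ℕ
  ne : snd ≠ rcv

/-- Communication actions: outputs `AB!m` and inputs `AB?m`. -/
inductive Act where
  | out : ℕ → ℕ → ℕ → Act
  | inp : ℕ → ℕ → ℕ → Act
deriving DecidableEq

/-- Finite or infinite words over `σ`. -/
inductive Word (σ : Type) : Type where
  | fin : List σ → Word σ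
  | inf : (ℕ → σ) → Word σ

namespace Word

def get? {σ : Type} : Word σ → ℕ → Option σ
  | fin l, i => l[i]?
  | inf f, i => some (f i)

/-- Prefix relation on possibly infinite words. -/
def Pref {σ : Type} : Word σ → Word σ → Prop
  | fin l, fin l' => l <+: l'
  | fin l, inf g => ∀ i, i < l.length → l[i]? = some (g i)
  | inf f, inf g => f = g
  | inf _, fin _ => False

/-- Concatenation; if the first word is infinite the result is the first word. -/
def cat {σ : Type} : Word σ → Word σ → Word σ
  | fin l, fin l' => fin (l ++ l')
  | fin l, inf g => inf (fun i => if h : i < l.length then l.get ⟨i, h⟩ else g (i - l.length))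
  | inf f, _ => inf f

def Finite {σ : Type} : Word σ → Prop
  | fin _ => True
  | inf _ => False

end Word

/-- Prefix closure of a language. -/
def prefCl {σ : Type} (L : Set (Word σ)) : Set (Word σ) :=
  {z | ∃ z' ∈ L, Word.Pref z z'}

def PrefixClosed {σ : Type} (L : Set (Word σ)) : Prop := L = prefCl L

def iptp (a : Interaction) : Set ℕ := {a.snd, a.rcv}

def asubj : Act → ℕ
  | .out A _ _ => A
  | .inp _ B _ => B

def aptp : Act → Set ℕ
  | .out A B _ => {A, B}
  | .inp A B _ => {A, B}

/-- Participants of a word of interactions. -/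
def wptp (w : Word Interaction) : Set ℕ :=
  {X | ∃ i a, w.get? i = some a ∧ X ∈ iptp a}

/-- Participants of a language of interactions. -/
def lptp (L : Set (Word Interaction)) : Set ℕ :=
  {X | ∃ w ∈ L, X ∈ wptp w}

/-- Global language: prefix-closed with finitely many participants. -/
def IsGLang (L : Set (Word Interaction)) : Prop :=
  PrefixClosed L ∧ (lptp L).Finite

/-- Projection of an interaction on a participant. -/
def projI (X : ℕ) (a : Interaction) : Option Act :=
  if X = a.snd then some (.out a.snd a.rcv a.msg)
  else if X = a.rcv then some (.inp a.snd a.rcv a.msg)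
  else none

def projL (X : ℕ) (l : List Interaction) : List Act := l.filterMap (projI X)

/-- Projection of a (possibly infinite) word of interactions on a participant. -/
noncomputable def proj (X : ℕ) : Word Interaction → Word Act
  | .fin l => .fin (projL X l)
  | .inf f =>
    if {i | (projI X (f i)).isSome = true}.Infinite then
      .inf (fun n =>
        (projI X (f (Nat.nth (fun i => (projI X (f i)).isSome = true) n))).getD (.out 0 0 0))
    else
      .fin (projL X ((List.range (sSup {i | (projI X (f i)).isSome = true} + 1)).map f))

/-- A communicating system: a set of participants with a local language for each. -/
structure CSystem where
  P : Set ℕ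
  lang : ℕ → Set (Word Act)

/-- Well-formedness of a communicating system: finitely many participants, each
assigned a prefix-closed `X`-local language over the participants of the system,
different from `{ε}`. -/
def IsSystem (S : CSystem) : Prop :=
  S.P.Finite ∧ ∀ X ∈ S.P,
    PrefixClosed (S.lang X) ∧
    (∀ w ∈ S.lang X, ∀ i a, Word.get? w i = some a → asubj a = X ∧ aptp a ⊆ S.P) ∧
    S.lang X ≠ {Word.fin []}

/-- Synchronous semantics of a communicating system. -/
def sem (S : CSystem) : Set (Word Interaction) :=
  {w | wptp w ⊆ S.P ∧ ∀ X ∈ S.P, proj X w ∈ S.lang X}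

/-- Projection of a global language on a participant. -/
def projLang (X : ℕ) (L : Set (Word Interaction)) : Set (Word Act) := proj X '' L

/-- The communicating system projected from a global language. -/
noncomputable def projSys (L : Set (Word Interaction)) : CSystem :=
  ⟨lptp L, fun X => projLang X L⟩

/-- Synchronous semantics of the projected system, `⟦L↾⟧`. -/
noncomputable def gsem (L : Set (Word Interaction)) : Set (Word Interaction) :=
  sem (projSys L)

/-- Closure under unknown information. -/
def CUI (L : Set (Word Interaction)) : Prop :=
  ∀ (w1 w2 : List Interaction) (a : Interaction) (w : Word Interaction),
    Word.fin (w1 ++ [a]) ∈ L → Word.fin (w2 ++ [a]) ∈ L → w ∈ L →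
    proj a.snd w = proj a.snd (Word.fin w1) →
    proj a.rcv w = proj a.rcv (Word.fin w2) →
    w.cat (Word.fin [a]) ∈ L

/-- Continuity: an infinite word belongs to `L` whenever infinitely many of its
finite prefixes do. -/
def WContinuous {σ : Type} (L : Set (Word σ)) : Prop :=
  ∀ g : ℕ → σ,
    {l : List σ | Word.fin l ∈ L ∧ Word.Pref (Word.fin l) (Word.inf g)}.Infinite →
    Word.inf g ∈ L

/-- Standard-or-continuous language. -/
def SC (L : Set (Word Interaction)) : Prop :=
  (∀ w ∈ L, w.Finite) ∨ WContinuous L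

/-- Maximal word in a language. -/
def MaximalIn {σ : Type} (L : Set (Word σ)) (w : Word σ) : Prop :=
  w ∈ L ∧ ∀ w' ∈ L, Word.Pref w w' → w' = w

/-- Participant `X` distinguishes two words. -/
def Distinguishes (X : ℕ) (w1 w2 : Word Interaction) : Prop :=
  proj X w1 ≠ proj X w2 ∧
  ¬ (Word.Pref (proj X w1) (proj X w2) ∧ proj X w1 ≠ proj X w2) ∧
  ¬ (Word.Pref (proj X w2) (proj X w1) ∧ proj X w2 ≠ proj X w1)

/-- Branch-awareness of a global language. -/
def BranchAware (L : Set (Word Interaction)) : Prop :=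
  ∀ X ∈ lptp L, ∀ w1 w2, MaximalIn L w1 → MaximalIn L w2 →
    proj X w1 ≠ proj X w2 → Distinguishes X w1 w2

/-- Swapping two adjacent independent interactions. -/
inductive SwapStep : List Interaction → List Interaction → Prop
  | mk (u v : List Interaction) (a b : Interaction) (h : iptp a ∩ iptp b = ∅) :
      SwapStep (u ++ a :: b :: v) (u ++ b :: a :: v)

/-- Mazurkiewicz trace equivalence on finite words. -/
def TraceEqL : List Interaction → List Interaction → Prop :=
  Relation.ReflTransGen SwapStep

/-- `w ≪ w'` à la Gastin. -/
def wll (w w' : Word Interaction) : Prop :=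
  ∀ l : List Interaction, Word.Pref (Word.fin l) w →
    ∃ l' h : List Interaction, Word.Pref (Word.fin l') w' ∧ TraceEqL (l ++ h) l'

/-- Trace equivalence on possibly infinite words. -/
def TraceEq : Word Interaction → Word Interaction → Prop
  | .fin l, .fin l' => TraceEqL l l'
  | w, w' => wll w w' ∧ wll w' w

/-- Finite-state automata with states `Fin n`, all states accepting. -/
structure FSA (σ : Type) where
  n : ℕ
  q0 : Fin n
  tr : Fin n → σ → Fin n → Prop

inductive FinRun {σ : Type} (A : FSA σ) : Fin A.n → List σ → Fin A.n → Prop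
  | nil (q : Fin A.n) : FinRun A q [] q
  | cons {q q' q'' : Fin A.n} {a : σ} {l : List σ} :
      A.tr q a q' → FinRun A q' l q'' → FinRun A q (a :: l) q''

/-- The language of an FSA with all states accepting: finite words labelling runs
from the initial state, together with infinite words labelling infinite runs
(Büchi acceptance with all states accepting). -/
def LangSet {σ : Type} (A : FSA σ) : Set (Word σ) :=
  {w | match w with
       | .fin l => ∃ q, FinRun A A.q0 l q
       | .inf f => ∃ qs : ℕ → Fin A.n, qs 0 = A.q0 ∧ ∀ i, A.tr (qs i) (f i) (qs (i+1))}

/-- Configurations of a system of CFSMs. -/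
def Conf (M : ℕ → FSA Act) : Type := (X : ℕ) → Fin (M X).n

/-- A synchronisation step of the product automaton. -/
def PStep (P : Finset ℕ) (M : ℕ → FSA Act) (s : Conf M) (a : Interaction) (s' : Conf M) : Prop :=
  a.snd ∈ P ∧ a.rcv ∈ P ∧
  (M a.snd).tr (s a.snd) (Act.out a.snd a.rcv a.msg) (s' a.snd) ∧
  (M a.rcv).tr (s a.rcv) (Act.inp a.snd a.rcv a.msg) (s' a.rcv) ∧
  ∀ X, X ≠ a.snd → X ≠ a.rcv → s X = s' X

def initConf (M : ℕ → FSA Act) : Conf M := fun X => (M X).q0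

inductive PRun (P : Finset ℕ) (M : ℕ → FSA Act) : Conf M → List Interaction → Conf M → Prop
  | nil (s : Conf M) : PRun P M s [] s
  | cons {s s' s'' : Conf M} {a : Interaction} {l : List Interaction} :
      PStep P M s a s' → PRun P M s' l s'' → PRun P M s (a :: l) s''

/-- The language of the synchronous product automaton of a system of CFSMs. -/
def prodLang (P : Finset ℕ) (M : ℕ → FSA Act) : Set (Word Interaction) :=
  {w | match w with
       | .fin l => ∃ s, PRun P M (initConf M) l s
       | .inf f => ∃ cs : ℕ → Conf M, cs 0 = initConf M ∧
           ∀ i, PStep P M (cs i) (f i) (cs (i+1))}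

section Aux

lemma projI_mem {X : ℕ} {a : Interaction} {act : Act} (h : projI X a = some act) :
    X ∈ iptp a := by
  unfold projI at h
  split_ifs at h with h1 h2
  · exact Or.inl h1
  · exact Or.inr h2

lemma projI_none {X : ℕ} {a : Interaction} (h : X ∉ iptp a) : projI X a = none := by
  simp only [iptp, Set.mem_insert_iff, Set.mem_singleton_iff, not_or] at h
  unfold projI
  rw [if_neg h.1, if_neg h.2]

lemma disj_left {a b : Interaction} (h : iptp a ∩ iptp b = ∅) {X : ℕ}
    (hX : X ∈ iptp a) : X ∉ iptp b := by
  intro hb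
  exact Set.eq_empty_iff_forall_notMem.mp h X ⟨hX, hb⟩

lemma mem_of_pref {L : Set (Word Interaction)} (hpc : PrefixClosed L)
    {z z' : Word Interaction} (hp : Word.Pref z z') (hz' : z' ∈ L) : z ∈ L := by
  rw [hpc]
  exact ⟨z', hz', hp⟩

lemma fin_pref {l l' : List Interaction} (h : l <+: l') :
    Word.Pref (Word.fin l) (Word.fin l') := h

lemma swapStep_length {l l' : List Interaction} (h : SwapStep l l') :
    l.length = l'.length := by
  cases h with
  | mk u v a b hd => simp

lemma traceEqL_length {l l' : List Interaction} (h : TraceEqL l l') :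
    l.length = l'.length := by
  induction h with
  | refl => rfl
  | tail _ hs ih => exact ih.trans (swapStep_length hs)

lemma swapStep_symm : Symmetric SwapStep := by
  intro l l' h
  cases h with
  | mk u v a b hd => exact SwapStep.mk u v b a (by rw [Set.inter_comm]; exact hd)

lemma traceEqL_symm {l l' : List Interaction} (h : TraceEqL l l') : TraceEqL l' l :=
  (@Relation.ReflTransGen.symmetric _ _ ⟨swapStep_symm⟩).symm _ _ h

lemma swapStep_projL {l l' : List Interaction} (h : SwapStep l l') (X : ℕ) :
    projL X l = projL X l' := by
  cases h with
  | mk u v a b hd =>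
    unfold projL
    rw [List.filterMap_append, List.filterMap_append]
    congr 1
    rcases ha : projI X a with _ | acta <;> rcases hb : projI X b with _ | actb <;>
      simp [List.filterMap_cons, ha, hb]
    exact absurd (projI_mem hb) (disj_left hd (projI_mem ha))

lemma cui_transfer {L : Set (Word Interaction)} (hpc : PrefixClosed L) (hcui : CUI L) :
    ∀ (v s t : List Interaction), (∀ X, projL X s = projL X t) →
      Word.fin t ∈ L → Word.fin (s ++ v) ∈ L → Word.fin (t ++ v) ∈ L := by
  intro v
  induction v with
  | nil => intro s t _ ht _; simpa using ht
  | cons c v' ih =>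
    intro s t hproj ht hs
    have hsc : Word.fin (s ++ [c]) ∈ L := by
      refine mem_of_pref hpc (fin_pref ⟨v', ?_⟩) hs
      simp
    have htc : Word.fin (t ++ [c]) ∈ L := by
      have h1 : proj c.snd (Word.fin t) = proj c.snd (Word.fin s) := by
        show Word.fin (projL c.snd t) = Word.fin (projL c.snd s)
        rw [hproj c.snd]
      have h2 : proj c.rcv (Word.fin t) = proj c.rcv (Word.fin s) := by
        show Word.fin (projL c.rcv t) = Word.fin (projL c.rcv s)
        rw [hproj c.rcv]
      have := hcui s s c (Word.fin t) hsc hsc ht h1 h2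
      simpa [Word.cat] using this
    have hproj' : ∀ X, projL X (s ++ [c]) = projL X (t ++ [c]) := by
      intro X
      unfold projL
      rw [List.filterMap_append, List.filterMap_append]
      exact congrArg (· ++ _) (hproj X)
    have hs' : Word.fin ((s ++ [c]) ++ v') ∈ L := by
      simpa [List.append_assoc] using hs
    have := ih (s ++ [c]) (t ++ [c]) hproj' htc hs'
    simpa [List.append_assoc] using this

lemma swap_mem {L : Set (Word Interaction)} (hpc : PrefixClosed L) (hcui : CUI L)
    {l l' : List Interaction} (h : SwapStep l l') (hl : Word.fin l ∈ L) :
    Word.fin l' ∈ L := by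
  cases h with
  | mk u v a b hd =>
    have heq1 : u ++ a :: b :: v = (u ++ [a, b]) ++ v := by simp
    have hab : Word.fin (u ++ [a, b]) ∈ L := by
      refine mem_of_pref hpc (fin_pref ⟨v, ?_⟩) hl
      simp
    have ha : Word.fin (u ++ [a]) ∈ L := by
      refine mem_of_pref hpc (fin_pref ⟨b :: v, ?_⟩) hl
      simp
    have hu : Word.fin u ∈ L := by
      refine mem_of_pref hpc (fin_pref ⟨a :: b :: v, rfl⟩) hl
    -- b.snd, b.rcv are not participants of a
    have hbs : projI b.snd a = none :=
      projI_none (disj_left (by rw [Set.inter_comm]; exact hd) (Or.inl rfl))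
    have hbr : projI b.rcv a = none :=
      projI_none (disj_left (by rw [Set.inter_comm]; exact hd) (Or.inr rfl))
    have has : projI a.snd b = none := projI_none (disj_left hd (Or.inl rfl))
    have har : projI a.rcv b = none := projI_none (disj_left hd (Or.inr rfl))
    -- Step 1: u ++ [b] ∈ L
    have hab' : Word.fin ((u ++ [a]) ++ [b]) ∈ L := by
      simpa [List.append_assoc] using hab
    have hub : Word.fin (u ++ [b]) ∈ L := by
      have h1 : proj b.snd (Word.fin u) = proj b.snd (Word.fin (u ++ [a])) := by
        show Word.fin (projL b.snd u) = Word.fin (projL b.snd (u ++ [a]))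
        unfold projL
        rw [List.filterMap_append]
        simp [List.filterMap_cons, hbs]
      have h2 : proj b.rcv (Word.fin u) = proj b.rcv (Word.fin (u ++ [a])) := by
        show Word.fin (projL b.rcv u) = Word.fin (projL b.rcv (u ++ [a]))
        unfold projL
        rw [List.filterMap_append]
        simp [List.filterMap_cons, hbr]
      have := hcui (u ++ [a]) (u ++ [a]) b (Word.fin u) hab' hab' hu h1 h2
      simpa [Word.cat] using this
    -- Step 2: u ++ [b, a] ∈ L
    have hba : Word.fin (u ++ [b, a]) ∈ L := by
      have h1 : proj a.snd (Word.fin (u ++ [b])) = proj a.snd (Word.fin u) := by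
        show Word.fin (projL a.snd (u ++ [b])) = Word.fin (projL a.snd u)
        unfold projL
        rw [List.filterMap_append]
        simp [List.filterMap_cons, has]
      have h2 : proj a.rcv (Word.fin (u ++ [b])) = proj a.rcv (Word.fin u) := by
        show Word.fin (projL a.rcv (u ++ [b])) = Word.fin (projL a.rcv u)
        unfold projL
        rw [List.filterMap_append]
        simp [List.filterMap_cons, har]
      have := hcui u u a (Word.fin (u ++ [b])) ha ha hub h1 h2
      have h3 : (Word.fin (u ++ [b])).cat (Word.fin [a]) = Word.fin (u ++ [b, a]) := by
        simp [Word.cat]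
      rwa [h3] at this
    -- Step 3: transfer the suffix v
    have hprojeq : ∀ X, projL X (u ++ [a, b]) = projL X (u ++ [b, a]) :=
      swapStep_projL (SwapStep.mk u [] a b hd) 
    have hs : Word.fin ((u ++ [a, b]) ++ v) ∈ L := by rwa [← heq1]
    have := cui_transfer hpc hcui v (u ++ [a, b]) (u ++ [b, a]) hprojeq hba hs
    simpa [List.append_assoc] using this

lemma traceEqL_mem {L : Set (Word Interaction)} (hpc : PrefixClosed L) (hcui : CUI L)
    {l l' : List Interaction} (h : TraceEqL l l') (hl : Word.fin l ∈ L) :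
    Word.fin l' ∈ L := by
  induction h with
  | refl => exact hl
  | tail _ hs ih => exact swap_mem hpc hcui hs ih

lemma range_pref {σ : Type} (g : ℕ → σ) (n : ℕ) :
    Word.Pref (Word.fin ((List.range n).map g)) (Word.inf g) := by
  show ∀ i, i < ((List.range n).map g).length → ((List.range n).map g)[i]? = some (g i)
  intro i hi
  simp only [List.length_map, List.length_range] at hi
  simp [hi]

lemma no_wll_inf_fin (f : ℕ → Interaction) (l : List Interaction) :
    ¬ wll (Word.inf f) (Word.fin l) := by
  intro h
  obtain ⟨l', hh, hpref, heq⟩ := h ((List.range (l.length + 1)).map f) (range_pref f _)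
  have hlen := traceEqL_length heq
  have hle : l'.length ≤ l.length := List.IsPrefix.length_le hpref
  simp only [List.length_append, List.length_map, List.length_range] at hlen
  omega

end Aux

/-- A standard-or-continuous CUI global language is concurrency closed. -/
theorem stmt12 (L : Set (Word Interaction)) (hL : IsGLang L)
    (hsc : SC L) (hcui : CUI L) :
    ∀ w ∈ L, ∀ wp : Word Interaction, TraceEq w wp → wp ∈ L := by
  obtain ⟨hpc, _⟩ := hL
  intro w hw wp htr
  cases w with
  | fin l =>
    cases wp with
    | fin l' =>
      have h : TraceEqL l l' := htr
      exact traceEqL_mem hpc hcui h hw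
    | inf g =>
      have h : wll (Word.fin l) (Word.inf g) ∧ wll (Word.inf g) (Word.fin l) := htr
      exact absurd h.2 (no_wll_inf_fin g l)
  | inf f =>
    cases wp with
    | fin l' =>
      have h : wll (Word.inf f) (Word.fin l') ∧ wll (Word.fin l') (Word.inf f) := htr
      exact absurd h.1 (no_wll_inf_fin f l')
    | inf g =>
      have h : wll (Word.inf f) (Word.inf g) ∧ wll (Word.inf g) (Word.inf f) := htr
      rcases hsc with hfin | hcont
      · exact absurd (hfin _ hw) (by simp [Word.Finite])
      · apply hcont
        have hmem : ∀ n : ℕ,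
            ((List.range n).map g) ∈
              {l : List Interaction | Word.fin l ∈ L ∧
                Word.Pref (Word.fin l) (Word.inf g)} := by
          intro n
          refine ⟨?_, range_pref g n⟩
          obtain ⟨l', hh, hpref, heq⟩ := h.2 ((List.range n).map g) (range_pref g n)
          have hl' : Word.fin l' ∈ L := mem_of_pref hpc hpref hw
          have hlh : Word.fin ((List.range n).map g ++ hh) ∈ L :=
            traceEqL_mem hpc hcui (traceEqL_symm heq) hl'
          exact mem_of_pref hpc (fin_pref ⟨hh, rfl⟩) hlh
        refine Set.infinite_of_injective_forall_mem
          (f := fun n : ℕ => (List.range n).map g) ?_ hmem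
        intro m n hmn
        have := congrArg List.length hmn
        simpa using this
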